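/- Let P be a locally finite partially ordered set, x < y in P, and Q, Q' ⊆ P subsets complementing the interval [x,y]_P. Let m be an [x,y]_Q-admissible monomial such that the monomial m^{−1} · t_y/t_x is [x,y]_{Q'}-admissible. Then the coefficient of m in Inv_Q θ (x,y) equals the negative of the coefficient of m^{−1} · t_y/t_x in Inv_{Q'} θ (x,y). -/

import Mathlib

open Finset
open scoped Classical

variable {P A : Type*}

/-- The zeta function of a poset, as an element of its incidence algebra. -/
noncomputable def zeta [PartialOrder P] [CommRing A] : P → P → A :=
  fun x y => if x ≤ y then 1 else 0

/-- `IsInvOn Q ε η` says that `η` represents the inverse `Inv_Q ε` of the restriction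
`ε|_{Q×Q}` of `ε` in the incidence algebra `I_A(Q)` of the subposet `Q ⊆ P`.
Elements of `I_A(Q)` are encoded as functions `P → P → A` supported on pairs
`x ≤ y` with `x, y ∈ Q`; convolution over `Q` is the sum over `z ∈ [x,y]_Q`,
and the unit of `I_A(Q)` is the Kronecker delta on `Q`. -/
noncomputable def IsInvOn [PartialOrder P] [LocallyFiniteOrder P] [CommRing A]
    (Q : Set P) (ε η : P → P → A) : Prop :=
  (∀ x y, ¬(x ∈ Q ∧ y ∈ Q ∧ x ≤ y) → η x y = 0) ∧
  (∀ x ∈ Q, ∀ y ∈ Q,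
    ∑ z ∈ (Finset.Icc x y).filter (· ∈ Q), ε x z * η z y = if x = y then 1 else 0) ∧
  (∀ x ∈ Q, ∀ y ∈ Q,
    ∑ z ∈ (Finset.Icc x y).filter (· ∈ Q), η x z * ε z y = if x = y then 1 else 0)

/-- The Laurent polynomial algebra `A_P = ℚ[t_x^{±1} : x ∈ P]`, realized as the monoid
algebra of `ℚ` over the additive group of finitely supported exponent vectors `P →₀ ℤ`. -/
abbrev AP (P : Type*) : Type _ := AddMonoidAlgebra ℚ (P →₀ ℤ)

/-- The exponent vector of the variable `t_x`. -/
noncomputable def tv (x : P) : P →₀ ℤ := Finsupp.single x 1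

/-- The element `θ(x,y) = Σ_{x ≤ z ≤ y} μ(z,y) · t_z/t_x` of `I_{A_P}(P)`,
where `mob` is the Möbius function of `P`. -/
noncomputable def theta [PartialOrder P] [LocallyFiniteOrder P]
    (mob : P → P → ℚ) (x y : P) : AP P :=
  ∑ z ∈ Finset.Icc x y, mob z y • AddMonoidAlgebra.single (tv z - tv x) (1 : ℚ)

/-- `AdmissibleExp R y M` says that `M` is the exponent vector of an `R`-admissible monomial
`Π_{i<k} t_{w_i}/t_{z_i}` (for the interval ending at `y`): there are `z : Fin (k+1) → P`
with `z_k = y`, all `z_i ∈ R`, and `w : Fin k → P` with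
`z₁ ≤ w₁ ≤ z₂ ≤ ⋯ ≤ z_k ≤ w_k ≤ y`, such that `M = Σ_i (tv (w i) - tv (z i))`. -/
def AdmissibleExp [PartialOrder P] (R : Set P) (y : P) (M : P →₀ ℤ) : Prop :=
  ∃ (k : ℕ) (z : Fin (k+1) → P) (w : Fin k → P),
    z (Fin.last k) = y ∧ (∀ i : Fin k, z i.castSucc ∈ R) ∧
    (∀ i : Fin k, z i.castSucc ≤ w i) ∧ (∀ i : Fin k, w i ≤ z i.succ) ∧
    M = ∑ i : Fin k, (tv (w i) - tv (z i.castSucc))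

section Statement9Aux

variable {P : Type*} [PartialOrder P] [LocallyFiniteOrder P]

/-- The ring homomorphism of `A_P` inverting all variables. -/
noncomputable def phiNeg (P : Type*) : AP P →+* AP P :=
  AddMonoidAlgebra.mapDomainRingHom ℚ (negAddMonoidHom : (P →₀ ℤ) →+ (P →₀ ℤ))

lemma phiNeg_single (c : P →₀ ℤ) (q : ℚ) :
    phiNeg P (AddMonoidAlgebra.single c q) = AddMonoidAlgebra.single (-c) q := by
  simp [phiNeg, negAddMonoidHom]

lemma phiNeg_apply (f : AP P) (c : P →₀ ℤ) : (phiNeg P f).coeff c = f.coeff (-c) := by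
  have h := Finsupp.mapDomain_apply (f := fun a : P →₀ ℤ => -a) neg_injective f.coeff (-c)
  rw [neg_neg] at h
  exact h

lemma amaSingle_finset_sum {ι : Type*} (s : Finset ι) (m : P →₀ ℤ) (f : ι → ℚ) :
    (AddMonoidAlgebra.single m (∑ i ∈ s, f i) : AP P) = ∑ i ∈ s, AddMonoidAlgebra.single m (f i) :=
  map_sum (AddMonoidAlgebra.singleAddHom m) f s

lemma theta_eq (mob : P → P → ℚ) (u v : P) :
    theta mob u v = ∑ z ∈ Finset.Icc u v, AddMonoidAlgebra.single (tv z - tv u) (mob z v) := by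
  unfold theta
  exact Finset.sum_congr rfl fun z _ => by rw [AddMonoidAlgebra.smul_single', mul_one]

/-- `η(u,v) = Σ_{u ≤ a ≤ v} μ(a,v) t_v/t_a`, the global inverse of `θ`. -/
noncomputable def etaF (mob : P → P → ℚ) (u v : P) : AP P :=
  ∑ a ∈ Finset.Icc u v, AddMonoidAlgebra.single (tv v - tv a) (mob a v)

section Splits

variable {A : Type*} [AddCommGroup A]

lemma sum_Icc_split {u v : P} (h : u ≤ v) (f : P → A) :
    ∑ w ∈ Finset.Icc u v, f w = f u + ∑ w ∈ Finset.Ioc u v, f w := by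
  rw [Finset.Icc_eq_cons_Ioc h, Finset.sum_cons]

lemma sum_Ioc_split {u v : P} (h : u < v) (f : P → A) :
    ∑ w ∈ Finset.Ioc u v, f w = f v + ∑ w ∈ Finset.Ioo u v, f w := by
  rw [Finset.Ioc_eq_cons_Ioo h, Finset.sum_cons]

lemma sum_filter_Icc_split {S : Set P} {u v : P} (hu : u ∈ S) (h : u ≤ v) (f : P → A) :
    ∑ w ∈ (Finset.Icc u v).filter (· ∈ S), f w
      = f u + ∑ w ∈ (Finset.Ioc u v).filter (· ∈ S), f w := by
  rw [Finset.Icc_eq_cons_Ioc h, Finset.filter_cons, if_pos hu, Finset.sum_cons]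

lemma sum_filter_Ioc_split {S : Set P} {u v : P} (hv : v ∈ S) (h : u < v) (f : P → A) :
    ∑ w ∈ (Finset.Ioc u v).filter (· ∈ S), f w
      = f v + ∑ w ∈ (Finset.Ioo u v).filter (· ∈ S), f w := by
  rw [Finset.Ioc_eq_cons_Ioo h, Finset.filter_cons, if_pos hv, Finset.sum_cons]

lemma sum_filter_Ico_split {S : Set P} {v y : P} (h : v < y) (f : P → A) :
    ∑ w ∈ (Finset.Ico v y).filter (· ∈ S), f w
      = (if v ∈ S then f v else 0) + ∑ w ∈ (Finset.Ioo v y).filter (· ∈ S), f w := by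
  rw [Finset.Ico_eq_cons_Ioo h, Finset.filter_cons]
  split_ifs with hv
  · rw [Finset.sum_cons]
  · rw [zero_add]

end Splits

lemma Icc_ssubset_Icc {u z y : P} (h1 : u < z) (h2 : z ≤ y) :
    Finset.Icc z y ⊂ Finset.Icc u y := by
  refine (Finset.ssubset_iff_of_subset (Finset.Icc_subset_Icc h1.le le_rfl)).2
    ⟨u, Finset.mem_Icc.2 ⟨le_rfl, h1.le.trans h2⟩, ?_⟩
  simp [Finset.mem_Icc, h1.not_ge]

section Mob

variable {mob : P → P → ℚ} (hmob : IsInvOn Set.univ zeta mob)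
include hmob

lemma mob_row {a b : P} (h : a ≤ b) :
    ∑ w ∈ Finset.Icc a b, mob a w = if a = b then 1 else 0 := by
  have h3 := hmob.2.2 a (Set.mem_univ a) b (Set.mem_univ b)
  simp only [Set.mem_univ, Finset.filter_true] at h3
  rw [← h3]
  refine Finset.sum_congr rfl fun w hw => ?_
  rw [Finset.mem_Icc] at hw
  rw [zeta, if_pos hw.2, mul_one]

lemma mob_col {u v : P} (h : u ≤ v) :
    ∑ a ∈ Finset.Icc u v, mob a v = if u = v then 1 else 0 := by
  have h3 := hmob.2.1 u (Set.mem_univ u) v (Set.mem_univ v)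
  simp only [Set.mem_univ, Finset.filter_true] at h3
  rw [← h3]
  refine Finset.sum_congr rfl fun a ha => ?_
  rw [Finset.mem_Icc] at ha
  rw [zeta, if_pos ha.1, one_mul]

lemma mob_self (u : P) : mob u u = 1 := by
  have := mob_col hmob (le_refl u)
  rw [Finset.Icc_self, Finset.sum_singleton, if_pos rfl] at this
  exact this

lemma theta_self (u : P) : theta mob u u = 1 := by
  rw [theta_eq, Finset.Icc_self, Finset.sum_singleton, mob_self hmob, sub_self]
  exact AddMonoidAlgebra.one_def.symm

lemma etaF_self (u : P) : etaF mob u u = 1 := by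
  rw [etaF, Finset.Icc_self, Finset.sum_singleton, mob_self hmob, sub_self]
  exact AddMonoidAlgebra.one_def.symm

/-- The fundamental convolution identity: `θ * η = δ` over the whole poset. -/
lemma theta_conv_etaF {u v : P} (h : u ≤ v) :
    ∑ w ∈ Finset.Icc u v, theta mob u w * etaF mob w v
      = if u = v then (1 : AP P) else 0 := by
  classical
  have step1 : ∀ w ∈ Finset.Icc u v, theta mob u w * etaF mob w v
      = ∑ a ∈ Finset.Icc u w, ∑ b ∈ Finset.Icc w v,
          AddMonoidAlgebra.single ((tv a - tv u) + (tv v - tv b)) (mob a w * mob b v) := by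
    intro w _
    rw [theta_eq, etaF, Finset.sum_mul_sum]
    exact Finset.sum_congr rfl fun a _ => Finset.sum_congr rfl fun b _ =>
      AddMonoidAlgebra.single_mul_single _ _ _ _
  rw [Finset.sum_congr rfl step1]
  rw [Finset.sum_comm' (t' := Finset.Icc u v) (s' := fun a => Finset.Icc a v)
    (by
      intro w a
      simp only [Finset.mem_Icc]
      constructor
      · rintro ⟨⟨h1, h2⟩, h3, h4⟩
        exact ⟨⟨h4, h2⟩, h3, h4.trans h2⟩
      · rintro ⟨⟨h1, h2⟩, h3, h4⟩
        exact ⟨⟨h3.trans h1, h2⟩, h3, h1⟩)]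
  have step2 : ∀ a ∈ Finset.Icc u v,
      (∑ w ∈ Finset.Icc a v, ∑ b ∈ Finset.Icc w v,
        AddMonoidAlgebra.single ((tv a - tv u) + (tv v - tv b)) (mob a w * mob b v))
      = AddMonoidAlgebra.single (tv v - tv u) (mob a v) := by
    intro a ha
    rw [Finset.mem_Icc] at ha
    rw [Finset.sum_comm' (t' := Finset.Icc a v) (s' := fun b => Finset.Icc a b)
      (by
        intro w b
        simp only [Finset.mem_Icc]
        constructor
        · rintro ⟨⟨h1, h2⟩, h3, h4⟩
          exact ⟨⟨h1, h3⟩, h1.trans h3, h4⟩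
        · rintro ⟨⟨h1, h2⟩, h3, h4⟩
          exact ⟨⟨h1, h2.trans h4⟩, h2, h4⟩)]
    have inner : ∀ b ∈ Finset.Icc a v,
        (∑ w ∈ Finset.Icc a b,
          AddMonoidAlgebra.single ((tv a - tv u) + (tv v - tv b)) (mob a w * mob b v))
        = if a = b then
            AddMonoidAlgebra.single ((tv a - tv u) + (tv v - tv b)) (mob b v) else 0 := by
      intro b hb
      rw [Finset.mem_Icc] at hb
      rw [← amaSingle_finset_sum, ← Finset.sum_mul, mob_row hmob hb.1]
      split_ifs with hab
      · rw [one_mul]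
      · rw [zero_mul, AddMonoidAlgebra.single_zero]
    rw [Finset.sum_congr rfl inner, Finset.sum_ite_eq, if_pos (Finset.mem_Icc.2 ⟨le_rfl, ha.2⟩)]
    congr 1
    abel
  rw [Finset.sum_congr rfl step2, ← amaSingle_finset_sum, mob_col hmob h]
  split_ifs with huv
  · subst huv; rw [sub_self]; exact AddMonoidAlgebra.one_def.symm
  · rw [AddMonoidAlgebra.single_zero]

lemma etaF_rec {u v : P} (h : u < v) :
    etaF mob u v = -∑ w ∈ Finset.Ioc u v, theta mob u w * etaF mob w v := by
  have h0 := theta_conv_etaF hmob h.le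
  rw [sum_Icc_split h.le, theta_self hmob, one_mul, if_neg h.ne] at h0
  exact eq_neg_of_add_eq_zero_left h0

end Mob

/-- Chain-sum inverse avoiding the complement of `S`, defined by recursion. -/
noncomputable def Nfun (ε : P → P → AP P) (S : Set P) (y : P) (u : P) : AP P :=
  if u = y then 1 else
    -∑ w ∈ ((Finset.Ioc u y).filter (· ∈ S)).attach,
      ε u w.1 * Nfun ε S y w.1
termination_by (Finset.Icc u y).card
decreasing_by
  have hw := w.2
  simp only [Finset.mem_filter, Finset.mem_Ioc] at hw
  exact Finset.card_lt_card (Icc_ssubset_Icc hw.1.1 hw.1.2)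

lemma Nfun_self (ε : P → P → AP P) (S : Set P) (y : P) : Nfun ε S y y = 1 := by
  rw [Nfun, if_pos rfl]

lemma Nfun_ne (ε : P → P → AP P) (S : Set P) {y u : P} (h : u ≠ y) :
    Nfun ε S y u = -∑ w ∈ (Finset.Ioc u y).filter (· ∈ S), ε u w * Nfun ε S y w := by
  rw [Nfun, if_neg h,
    Finset.sum_attach ((Finset.Ioc u y).filter (· ∈ S)) (fun w => ε u w * Nfun ε S y w)]

/-- Any `IsInvOn`-inverse of `θ` over `Q` agrees with the chain-sum `Nfun`. -/
lemma inv_eq_N {mob : P → P → ℚ} (hmob : IsInvOn Set.univ zeta mob)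
    {Q : Set P} {y : P} (hyQ : y ∈ Q) {invθ : P → P → AP P}
    (hinv : IsInvOn Q (theta mob) invθ) :
    ∀ n (u : P), (Finset.Icc u y).card ≤ n → u ∈ Q → u ≤ y →
      invθ u y = Nfun (theta mob) Q y u := by
  intro n
  induction n with
  | zero =>
    intro u hcard hu huy
    exact absurd (Finset.card_pos.2 ⟨u, Finset.mem_Icc.2 ⟨le_rfl, huy⟩⟩) (by omega)
  | succ n IH =>
    intro u hcard hu huy
    rcases eq_or_lt_of_le huy with rfl | hlt
    · have h0 := hinv.2.1 u hu u hu
      rw [if_pos rfl, Finset.Icc_self, Finset.filter_singleton, if_pos hu,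
        Finset.sum_singleton, theta_self hmob, one_mul] at h0
      rw [h0, Nfun_self]
    · have h0 := hinv.2.1 u hu y hyQ
      rw [if_neg hlt.ne, sum_filter_Icc_split hu huy, theta_self hmob, one_mul] at h0
      rw [eq_neg_of_add_eq_zero_left h0, Nfun_ne _ _ hlt.ne]
      congr 1
      refine Finset.sum_congr rfl fun z hz => ?_
      rw [Finset.mem_filter, Finset.mem_Ioc] at hz
      have hb : (Finset.Icc z y).card ≤ n := by
        have := Finset.card_lt_card (Icc_ssubset_Icc hz.1.1 hz.1.2)
        omega
      rw [IH z hb hz.2 hz.1.2]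

lemma eta_hat (mob : P → P → ℚ) (u z : P) :
    AddMonoidAlgebra.single (tv z - tv u) (1 : ℚ) * phiNeg P (theta mob u z)
      = etaF mob u z := by
  rw [theta_eq, map_sum, Finset.mul_sum, etaF]
  refine Finset.sum_congr rfl fun a _ => ?_
  rw [phiNeg_single, AddMonoidAlgebra.single_mul_single, one_mul]
  congr 1
  abel

/-- The hat transform of `invθ'` is an inverse of `η` over `Q'`. -/
lemma G_conv {mob : P → P → ℚ} {Q' : Set P} {invθ' : P → P → AP P}
    (hinv' : IsInvOn Q' (theta mob) invθ') {y : P} (hy : y ∈ Q')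
    {u : P} (hu : u ∈ Q') :
    ∑ z ∈ (Finset.Icc u y).filter (· ∈ Q'),
      etaF mob u z * (AddMonoidAlgebra.single (tv y - tv z) (1 : ℚ) * phiNeg P (invθ' z y))
      = if u = y then (1 : AP P) else 0 := by
  have h0 := hinv'.2.1 u hu y hy
  have h1 := congrArg (fun f => AddMonoidAlgebra.single (tv y - tv u) (1 : ℚ) * phiNeg P f) h0
  simp only [map_sum, Finset.mul_sum] at h1
  have h2 : ∀ z ∈ (Finset.Icc u y).filter (· ∈ Q'),
      AddMonoidAlgebra.single (tv y - tv u) (1 : ℚ) * phiNeg P (theta mob u z * invθ' z y)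
      = etaF mob u z *
          (AddMonoidAlgebra.single (tv y - tv z) (1 : ℚ) * phiNeg P (invθ' z y)) := by
    intro z _
    rw [map_mul, ← eta_hat mob u z,
      show (AddMonoidAlgebra.single (tv y - tv u) (1 : ℚ) : AP P)
          = AddMonoidAlgebra.single (tv z - tv u) 1 * AddMonoidAlgebra.single (tv y - tv z) 1 by
        rw [AddMonoidAlgebra.single_mul_single, one_mul]
        congr 1
        abel]
    ring
  rw [Finset.sum_congr rfl h2] at h1
  rw [h1]
  split_ifs with huy
  · subst huy
    rw [map_one, mul_one, sub_self]
    exact AddMonoidAlgebra.one_def.symm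
  · rw [map_zero, mul_zero]

/-- Key combinatorial lemma (K''): the global `η` decomposes through `Nfun` and `Q'`. -/
lemma Kpp {mob : P → P → ℚ} (hmob : IsInvOn Set.univ zeta mob)
    {Q Q' : Set P} {x y : P} (hyQ : y ∈ Q)
    (hcompl : ∀ z : P, x < z → z < y → ((z ∈ Q) ↔ ¬ (z ∈ Q'))) :
    ∀ n (u : P), (Finset.Icc u y).card ≤ n → x ≤ u → u ≤ y →
      etaF mob u y = Nfun (theta mob) Q y u
        + ∑ z ∈ (Finset.Ioo u y).filter (· ∈ Q'),
            etaF mob u z * Nfun (theta mob) Q y z := by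
  intro n
  induction n with
  | zero =>
    intro u hcard hxu huy
    exact absurd (Finset.card_pos.2 ⟨u, Finset.mem_Icc.2 ⟨le_rfl, huy⟩⟩) (by omega)
  | succ n IH =>
    intro u hcard hxu huy
    set N := Nfun (theta mob) Q y with hN
    rcases eq_or_lt_of_le huy with rfl | hlt
    · simp [etaF_self hmob, hN, Nfun_self]
    · -- rewrite each `etaF u z` in the sum
      have hA : ∑ z ∈ (Finset.Ioo u y).filter (· ∈ Q'), etaF mob u z * N z
          = -∑ v ∈ Finset.Ioo u y, theta mob u v *
              ((if v ∈ Q' then N v else 0)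
                + ∑ z ∈ (Finset.Ioo v y).filter (· ∈ Q'), etaF mob v z * N z) := by
        have ha1 : ∀ z ∈ (Finset.Ioo u y).filter (· ∈ Q'),
            etaF mob u z * N z
              = -∑ v ∈ Finset.Ioc u z, theta mob u v * etaF mob v z * N z := by
          intro z hz
          rw [Finset.mem_filter, Finset.mem_Ioo] at hz
          rw [etaF_rec hmob hz.1.1, neg_mul, Finset.sum_mul]
        rw [Finset.sum_congr rfl ha1, Finset.sum_neg_distrib]
        congr 1
        rw [Finset.sum_comm' (t' := Finset.Ioo u y)
          (s' := fun v => (Finset.Ico v y).filter (· ∈ Q'))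
          (by
            intro z v
            simp only [Finset.mem_filter, Finset.mem_Ioo, Finset.mem_Ioc, Finset.mem_Ico]
            constructor
            · rintro ⟨⟨⟨h1, h2⟩, h3⟩, h4, h5⟩
              exact ⟨⟨⟨h5, h2⟩, h3⟩, h4, h5.trans_lt h2⟩
            · rintro ⟨⟨⟨h1, h2⟩, h3⟩, h4, h5⟩
              exact ⟨⟨⟨h4.trans_le h1, h2⟩, h3⟩, h4, h1⟩)]
        refine Finset.sum_congr rfl fun v hv => ?_
        rw [Finset.mem_Ioo] at hv
        rw [sum_filter_Ico_split hv.2, etaF_self hmob, mul_one, mul_add, mul_ite,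
          mul_zero, Finset.mul_sum]
        congr 1
        exact Finset.sum_congr rfl fun z _ => mul_assoc _ _ _
      have hB : N u = -(theta mob u y
          + ∑ v ∈ Finset.Ioo u y, (if v ∈ Q then theta mob u v * N v else 0)) := by
        rw [hN, Nfun_ne _ _ hlt.ne, sum_filter_Ioc_split hyQ hlt, Nfun_self, mul_one,
          Finset.sum_filter]
      have key : ∀ v ∈ Finset.Ioo u y,
          (if v ∈ Q then theta mob u v * N v else 0)
            + theta mob u v * ((if v ∈ Q' then N v else 0)
                + ∑ z ∈ (Finset.Ioo v y).filter (· ∈ Q'), etaF mob v z * N z)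
          = theta mob u v * etaF mob v y := by
        intro v hv
        rw [Finset.mem_Ioo] at hv
        have hxv : x < v := lt_of_le_of_lt hxu hv.1
        have hQQ' := hcompl v hxv hv.2
        have hb : (Finset.Icc v y).card ≤ n := by
          have := Finset.card_lt_card (Icc_ssubset_Icc hv.1 hv.2.le)
          omega
        have hIH := IH v hb hxv.le hv.2.le
        rw [hIH]
        by_cases hvQ : v ∈ Q
        · rw [if_pos hvQ, if_neg (hQQ'.1 hvQ)]
          ring
        · rw [if_neg hvQ, if_pos (by by_contra hc; exact hvQ (hQQ'.2 hc))]
          ring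
      rw [etaF_rec hmob hlt, sum_Ioc_split hlt, etaF_self hmob, mul_one, hA, hB, ← neg_add]
      congr 1
      rw [add_assoc, ← Finset.sum_add_distrib]
      congr 1
      exact (Finset.sum_congr rfl key).symm

/-- Value of the hat transform of `invθ'`. -/
lemma G_eq {mob : P → P → ℚ} (hmob : IsInvOn Set.univ zeta mob)
    {Q Q' : Set P} {x y : P} (hyQ : y ∈ Q) (hyQ' : y ∈ Q')
    (hcompl : ∀ z : P, x < z → z < y → ((z ∈ Q) ↔ ¬ (z ∈ Q')))
    {invθ' : P → P → AP P} (hinv' : IsInvOn Q' (theta mob) invθ') :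
    ∀ n (u : P), (Finset.Icc u y).card ≤ n → u ∈ Q' → x ≤ u → u < y →
      AddMonoidAlgebra.single (tv y - tv u) (1 : ℚ) * phiNeg P (invθ' u y)
        = -(Nfun (theta mob) Q y u) := by
  have hGy : AddMonoidAlgebra.single (tv y - tv y) (1 : ℚ) * phiNeg P (invθ' y y) = 1 := by
    have h0 := hinv'.2.1 y hyQ' y hyQ'
    rw [if_pos rfl, Finset.Icc_self, Finset.filter_singleton, if_pos hyQ',
      Finset.sum_singleton, theta_self hmob, one_mul] at h0
    rw [h0, map_one, mul_one, sub_self]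
    exact AddMonoidAlgebra.one_def.symm
  intro n
  induction n with
  | zero =>
    intro u hcard _ _ huy
    exact absurd (Finset.card_pos.2 ⟨u, Finset.mem_Icc.2 ⟨le_rfl, huy.le⟩⟩) (by omega)
  | succ n IH =>
    intro u hcard hu hxu hlt
    have h0 := G_conv hinv' hyQ' hu
    rw [if_neg hlt.ne, sum_filter_Icc_split hu hlt.le, etaF_self hmob, one_mul] at h0
    rw [eq_neg_of_add_eq_zero_left h0, sum_filter_Ioc_split hyQ' hlt, hGy, mul_one]
    have hz : ∀ z ∈ (Finset.Ioo u y).filter (· ∈ Q'),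
        etaF mob u z *
          (AddMonoidAlgebra.single (tv y - tv z) (1 : ℚ) * phiNeg P (invθ' z y))
        = -(etaF mob u z * Nfun (theta mob) Q y z) := by
      intro z hz
      rw [Finset.mem_filter, Finset.mem_Ioo] at hz
      have hb : (Finset.Icc z y).card ≤ n := by
        have := Finset.card_lt_card (Icc_ssubset_Icc hz.1.1 hz.1.2.le)
        omega
      rw [IH z hb hz.2 (hxu.trans hz.1.1.le) hz.1.2, mul_neg]
    rw [Finset.sum_congr rfl hz, Finset.sum_neg_distrib,
      Kpp hmob hyQ hcompl ((Finset.Icc u y).card) u le_rfl hxu hlt.le]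
    abel

end Statement9Aux

/-- let `x < y` in `P` and let `Q, Q' ⊆ P` complement the interval `[x,y]_P`.
Let `m` be an `[x,y]_Q`-admissible monomial (with exponent vector
`M = Σ_i (tv (w i) - tv (z i))`) such that `m⁻¹ · t_y/t_x` (with exponent vector
`tv y - tv x - M`) is `[x,y]_{Q'}`-admissible.  Then the coefficient of `m` in
`Inv_Q θ (x,y)` is the negative of the coefficient of `m⁻¹ · t_y/t_x` in `Inv_{Q'} θ (x,y)`.
Here `mob` is the Möbius function of `P` and `invθ`, `invθ'` represent `Inv_Q θ`,
`Inv_{Q'} θ`. -/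
theorem statement9 [PartialOrder P] [LocallyFiniteOrder P]
    (x y : P) (hxy : x < y) (Q Q' : Set P)
    (hxQ : x ∈ Q) (hyQ : y ∈ Q) (hxQ' : x ∈ Q') (hyQ' : y ∈ Q')
    (hcompl : ∀ z : P, x < z → z < y → ((z ∈ Q) ↔ ¬ (z ∈ Q')))
    (mob : P → P → ℚ) (hmob : IsInvOn Set.univ zeta mob)
    (invθ : P → P → AP P) (hinvθ : IsInvOn Q (theta mob) invθ)
    (invθ' : P → P → AP P) (hinvθ' : IsInvOn Q' (theta mob) invθ')
    (M : P →₀ ℤ)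
    (hM : AdmissibleExp {z | z ∈ Q ∧ x ≤ z ∧ z ≤ y} y M)
    (hM' : AdmissibleExp {z | z ∈ Q' ∧ x ≤ z ∧ z ≤ y} y (tv y - tv x - M)) :
    (invθ x y).coeff M = - (invθ' x y).coeff (tv y - tv x - M) := by
  classical
  have hinv_eq : invθ x y = Nfun (theta mob) Q y x :=
    inv_eq_N hmob hyQ hinvθ ((Finset.Icc x y).card) x le_rfl hxQ hxy.le
  have hG := G_eq hmob hyQ hyQ' hcompl hinvθ' ((Finset.Icc x y).card) x le_rfl hxQ' le_rfl hxy
  have hmain : invθ x y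
      = -(AddMonoidAlgebra.single (tv y - tv x) (1 : ℚ) * phiNeg P (invθ' x y)) := by
    rw [hG, neg_neg, hinv_eq]
  have hco := congrArg (fun f : AP P => f.coeff M) hmain
  rw [hco]
  rw [show (-(AddMonoidAlgebra.single (tv y - tv x) (1 : ℚ) * phiNeg P (invθ' x y))).coeff M
      = -((AddMonoidAlgebra.single (tv y - tv x) (1 : ℚ) * phiNeg P (invθ' x y)).coeff M) from rfl]
  rw [AddMonoidAlgebra.coeff_single_mul_apply, one_mul, phiNeg_apply]
  have harg : -(-(tv y - tv x) + M) = tv y - tv x - M := by abel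
  rw [harg]
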